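/- Let (X, ‖·‖) be a Banach space and T : X → X a (k,b)-enriched Chatterjea mapping: there exist b ∈ [0,1/2) and k ∈ [0,∞) such that ‖k(x-y)+Tx-Ty‖ ≤ b(‖(k+1)(x-y)+y-Ty‖ + ‖(k+1)(y-x)+x-Tx‖) for all x,y ∈ X. Then T has exactly one fixed point, and there exists λ ∈ (0,1] such that the Krasnoselskij iteration x_{n+1} = (1-λ)x_n + λTx_n converges to it for every starting point. -/
import Mathlib

open Filter

lemma chatterjea_fix {X : Type*} [NormedAddCommGroup X] [NormedSpace ℝ X]
    [CompleteSpace X] (S : X → X) (b : ℝ) (hb0 : 0 ≤ b) (hb : b < 1 / 2)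
    (hS : ∀ x y : X, ‖S x - S y‖ ≤ b * (‖x - S y‖ + ‖y - S x‖)) :
    ∃ p : X, S p = p ∧ (∀ q : X, S q = q → q = p) ∧
      ∀ x : ℕ → X, (∀ n, x (n + 1) = S (x n)) →
        Tendsto x atTop (nhds p) := by
  have hb1 : 0 < 1 - b := by linarith
  -- uniqueness of fixed points
  have huniq : ∀ p q : X, S p = p → S q = q → q = p := by
    intro p q hp hq
    have h := hS p q
    rw [hp, hq, norm_sub_rev q p] at h
    have : ‖p - q‖ = 0 := by nlinarith [norm_nonneg (p - q)]
    have := sub_eq_zero.mp (norm_eq_zero.mp this)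
    exact this.symm
  -- any orbit converges to a fixed point
  have hconv : ∀ x : ℕ → X, (∀ n, x (n + 1) = S (x n)) →
      ∃ p : X, S p = p ∧ Tendsto x atTop (nhds p) := by
    intro x hx
    set c := b / (1 - b) with hc
    have hc0 : 0 ≤ c := div_nonneg hb0 hb1.le
    have hc1 : c < 1 := by rw [div_lt_one hb1]; linarith
    have hdec : ∀ n, ‖x (n + 2) - x (n + 1)‖ ≤ c * ‖x (n + 1) - x n‖ := by
      intro n
      have h := hS (x (n + 1)) (x n)
      rw [← hx (n + 1), ← hx n, sub_self, norm_zero] at h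
      have h2 : ‖x n - x (n + 2)‖ ≤ ‖x n - x (n + 1)‖ + ‖x (n + 1) - x (n + 2)‖ :=
        norm_sub_le_norm_sub_add_norm_sub _ _ _
      rw [norm_sub_rev (x n) (x (n+1)), norm_sub_rev (x (n+1)) (x (n+2))] at h2
      rw [hc, div_mul_eq_mul_div, le_div_iff₀ hb1]
      nlinarith [norm_nonneg (x (n + 2) - x (n + 1)), norm_nonneg (x (n + 1) - x n)]
    have hgeo : ∀ n, ‖x (n + 1) - x n‖ ≤ ‖x 1 - x 0‖ * c ^ n := by
      intro n
      induction n with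
      | zero => simp
      | succ m ih =>
        calc ‖x (m + 2) - x (m + 1)‖ ≤ c * ‖x (m + 1) - x m‖ := hdec m
        _ ≤ c * (‖x 1 - x 0‖ * c ^ m) := by
            exact mul_le_mul_of_nonneg_left ih hc0
        _ = ‖x 1 - x 0‖ * c ^ (m + 1) := by ring
    have hcauchy : CauchySeq x := by
      apply cauchySeq_of_le_geometric c (‖x 1 - x 0‖) hc1
      intro n
      rw [dist_eq_norm, norm_sub_rev]
      exact hgeo n
    obtain ⟨p, hp⟩ := cauchySeq_tendsto_of_complete hcauchy
    -- show S p = p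
    have hx2 : Tendsto (fun n => x (n + 2)) atTop (nhds p) :=
      hp.comp (tendsto_add_atTop_nat 2)
    have hx1 : Tendsto (fun n => x (n + 1)) atTop (nhds p) :=
      hp.comp (tendsto_add_atTop_nat 1)
    have hn2 : Tendsto (fun n => ‖p - x (n + 2)‖) atTop (nhds 0) := by
      have := (tendsto_const_nhds (x := p) (f := atTop)).sub hx2
      simpa using this.norm
    have hn1 : Tendsto (fun n => ‖x (n + 1) - p‖) atTop (nhds 0) := by
      have := hx1.sub (tendsto_const_nhds (x := p) (f := atTop))
      simpa using this.norm
    have hgtend : Tendsto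
        (fun n => ‖p - x (n + 2)‖ + b * ‖x (n + 1) - p‖ + b * ‖p - x (n + 2)‖)
        atTop (nhds 0) := by
      have := (hn2.add (hn1.const_mul b)).add (hn2.const_mul b)
      simpa using this
    have hkey : ∀ n, (1 - b) * ‖p - S p‖ ≤
        ‖p - x (n + 2)‖ + b * ‖x (n + 1) - p‖ + b * ‖p - x (n + 2)‖ := by
      intro n
      have h1 : ‖p - S p‖ ≤ ‖p - x (n + 2)‖ + ‖x (n + 2) - S p‖ :=
        norm_sub_le_norm_sub_add_norm_sub _ _ _
      have h2 : ‖x (n + 2) - S p‖ ≤ b * (‖x (n + 1) - S p‖ + ‖p - x (n + 2)‖) := by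
        have := hS (x (n + 1)) p
        rw [← hx (n + 1)] at this
        exact this
      have h3 : ‖x (n + 1) - S p‖ ≤ ‖x (n + 1) - p‖ + ‖p - S p‖ :=
        norm_sub_le_norm_sub_add_norm_sub _ _ _
      nlinarith [norm_nonneg (p - S p)]
    have hle : (1 - b) * ‖p - S p‖ ≤ 0 := ge_of_tendsto' hgtend hkey
    have hnorm0 : ‖p - S p‖ = 0 := by nlinarith [norm_nonneg (p - S p)]
    have hSp : S p = p := (sub_eq_zero.mp (norm_eq_zero.mp hnorm0)).symm
    exact ⟨p, hSp, hp⟩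
  -- base orbit from 0
  obtain ⟨p, hp, hptend⟩ := hconv (fun n => S^[n] 0)
    (fun n => Function.iterate_succ_apply' S n 0)
  refine ⟨p, hp, fun q hq => huniq p q hp hq, ?_⟩
  intro x hx
  obtain ⟨q, hq, hqt⟩ := hconv x hx
  rwa [huniq p q hp hq] at hqt

theorem enriched_chatterjea
    {X : Type*} [NormedAddCommGroup X] [NormedSpace ℝ X] [CompleteSpace X]
    (T : X → X) (k b : ℝ) (hk : 0 ≤ k) (hb0 : 0 ≤ b) (hb : b < 1 / 2)
    (hT : ∀ x y : X, ‖k • (x - y) + T x - T y‖ ≤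
        b * (‖(k + 1) • (x - y) + y - T y‖ + ‖(k + 1) • (y - x) + x - T x‖)) :
    ∃ p : X, T p = p ∧ (∀ q : X, T q = q → q = p) ∧
      ∃ lam ∈ Set.Ioc (0:ℝ) 1, ∀ x : ℕ → X,
        (∀ n, x (n + 1) = (1 - lam) • x n + lam • T (x n)) →
        Filter.Tendsto x Filter.atTop (nhds p) := by
  have hk1 : (0:ℝ) < k + 1 := by linarith
  set lam := (k + 1)⁻¹ with hlam
  have hlam0 : 0 < lam := inv_pos.mpr hk1
  have hlamk : lam * (k + 1) = 1 := inv_mul_cancel₀ hk1.ne'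
  have hlam1 : lam ≤ 1 := by
    rw [hlam]
    rw [inv_le_one_iff₀]; right; linarith
  have hne : (1:ℝ) + k ≠ 0 := by positivity
  have hlamk2 : (k + 1)⁻¹ * (k + 1) = 1 := inv_mul_cancel₀ hk1.ne'
  have hne' : k + (1:ℝ) ≠ 0 := hk1.ne'
  set S : X → X := fun z => (1 - lam) • z + lam • T z with hSdef
  have hS : ∀ x y : X, ‖S x - S y‖ ≤ b * (‖x - S y‖ + ‖y - S x‖) := by
    intro x y
    have e1 : S x - S y = lam • (k • (x - y) + T x - T y) := by
      simp only [hSdef]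
      match_scalars <;> (try simp only [hlam]) <;> first | ring1 | linear_combination hlamk2 | linear_combination -hlamk2
    have e2 : x - S y = lam • ((k + 1) • (x - y) + y - T y) := by
      simp only [hSdef]
      match_scalars <;> (try simp only [hlam]) <;> first | ring1 | linear_combination hlamk2 | linear_combination -hlamk2
    have e3 : y - S x = lam • ((k + 1) • (y - x) + x - T x) := by
      simp only [hSdef]
      match_scalars <;> (try simp only [hlam]) <;> first | ring1 | linear_combination hlamk2 | linear_combination -hlamk2
    rw [e1, e2, e3, norm_smul, norm_smul, norm_smul, Real.norm_eq_abs,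
      abs_of_pos hlam0]
    calc lam * ‖k • (x - y) + T x - T y‖
        ≤ lam * (b * (‖(k + 1) • (x - y) + y - T y‖ + ‖(k + 1) • (y - x) + x - T x‖)) :=
          mul_le_mul_of_nonneg_left (hT x y) hlam0.le
      _ = b * (lam * ‖(k + 1) • (x - y) + y - T y‖ + lam * ‖(k + 1) • (y - x) + x - T x‖) := by
          ring
  obtain ⟨p, hp, huniq, hconv⟩ := chatterjea_fix S b hb0 hb hS
  have hfixST : ∀ z : X, S z = z ↔ T z = z := by
    intro z
    constructor
    · intro h
      have : lam • (T z - z) = 0 := by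
        have := h
        simp only [hSdef] at this
        have h2 : lam • T z - lam • z = 0 := by
          have : (1 - lam) • z + lam • T z - z = 0 := by rw [this]; simp
          calc lam • T z - lam • z = (1 - lam) • z + lam • T z - z := by
                match_scalars <;> ring
            _ = 0 := this
        rw [← smul_sub] at h2
        exact h2
      have := smul_eq_zero.mp this
      rcases this with h | h
      · exact absurd h hlam0.ne'
      · exact sub_eq_zero.mp h
    · intro h
      simp only [hSdef, h]
      match_scalars <;> ring
  refine ⟨p, (hfixST p).mp hp, fun q hq => huniq q ((hfixST q).mpr hq), lam,
    ⟨hlam0, hlam1⟩, ?_⟩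
  intro x hx
  exact hconv x hx
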